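/- Let n ≥ 1, let 𝒴 be a finite nonempty set of labels, and let (X_i, Y_i), i = 1, ..., 2n+1, be random variables with values in a measurable space 𝒳 × 𝒴 whose joint distribution is exchangeable (invariant under every permutation of the indices 1, ..., 2n+1). Fix a measurable score function s : 𝒳 × 𝒴 → ℝ. For y ∈ 𝒴, let I_y = {i ∈ {n+1,...,2n} : Y_i = y}, n_y = |I_y|, and define the conditional conformal p-value p(X_{2n+1}|y) = (Σ_{i ∈ I_y} 1{s(X_i, y) ≤ s(X_{2n+1}, y)} + 1)/(n_y + 1). Then for every y ∈ 𝒴, every subset I ⊆ {n+1,...,2n}, and every t ∈ [0,1], if the event {I_y = I, Y_{2n+1} = y} has positive probability, then P(p(X_{2n+1}|y) ≤ t | I_y = I, Y_{2n+1} = y) ≤ t. -/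

import Mathlib

open MeasureTheory ProbabilityTheory
open scoped ENNReal

/-- At most `k` elements of a finite set can have (≤)-rank at most `k`. -/
lemma aux_rank_count_le {α : Type*} [DecidableEq α] (K : Finset α) (f : α → ℝ) (k : ℕ) :
    (K.filter (fun j => (K.filter (fun i => f i ≤ f j)).card ≤ k)).card ≤ k := by
  set A := K.filter (fun j => (K.filter (fun i => f i ≤ f j)).card ≤ k) with hA
  rcases A.eq_empty_or_nonempty with h | h
  · simp [h]
  · obtain ⟨j, hjA, hmax⟩ := A.exists_max_image f h
    have hsub : A ⊆ K.filter (fun i => f i ≤ f j) := by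
      intro a ha
      exact Finset.mem_filter.mpr ⟨(Finset.mem_filter.mp ha).1, hmax a ha⟩
    calc A.card ≤ (K.filter (fun i => f i ≤ f j)).card := Finset.card_le_card hsub
      _ ≤ k := (Finset.mem_filter.mp hjA).2

lemma aux_filter_eq_iff {α : Type*} (S I : Finset α) (p : α → Prop) [DecidablePred p]
    (hI : I ⊆ S) : S.filter p = I ↔ ∀ i ∈ S, (p i ↔ i ∈ I) := by
  constructor
  · intro h i hiS
    constructor
    · intro hpi
      rw [← h]; exact Finset.mem_filter.mpr ⟨hiS, hpi⟩
    · intro hiI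
      have := h ▸ hiI
      exact (Finset.mem_filter.mp this).2
  · intro h
    ext i
    simp only [Finset.mem_filter]
    constructor
    · rintro ⟨hiS, hpi⟩; exact (h i hiS).mp hpi
    · intro hiI; exact ⟨hI hiI, (h i (hI hiI)).mpr hiI⟩

/-- Proposition 2: validity of the class-specific conditional conformal
p-value. For exchangeable pairs `(X_i, Y_i)`, `i = 1, ..., 2n+1` (indexed by
`Fin (2n+1)`, the last index being the test point), calibration indices `{n+1,...,2n}`
(here `{i : n ≤ i < 2n}`), and any label `y`, subset `I` of the calibration indices and
`t ∈ [0,1]`: conditionally on `{I_y = I, Y_{2n+1} = y}` (assumed of positive probability),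
`P(p(X_{2n+1}|y) ≤ t) ≤ t`. -/
theorem conditional_conformal_pvalue_valid
    {Ω : Type*} [MeasurableSpace Ω] (P : Measure Ω) [IsProbabilityMeasure P]
    {𝒳 : Type*} [MeasurableSpace 𝒳]
    {𝒴 : Type*} [Fintype 𝒴] [Nonempty 𝒴] [DecidableEq 𝒴]
    [MeasurableSpace 𝒴] [MeasurableSingletonClass 𝒴]
    (n : ℕ) (hn : 1 ≤ n)
    (Z : Fin (2 * n + 1) → Ω → 𝒳 × 𝒴)
    (hmeas : ∀ i, Measurable (Z i))
    (hexch : ∀ σ : Equiv.Perm (Fin (2 * n + 1)),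
      Measure.map (fun ω i => Z (σ i) ω) P = Measure.map (fun ω i => Z i ω) P)
    (s : 𝒳 × 𝒴 → ℝ) (hs : Measurable s)
    (Dcal : Finset (Fin (2 * n + 1)))
    (hDcal : Dcal = Finset.univ.filter (fun i : Fin (2 * n + 1) => n ≤ (i : ℕ) ∧ (i : ℕ) < 2 * n))
    (Iy : 𝒴 → Ω → Finset (Fin (2 * n + 1)))
    (hIy : ∀ y ω, Iy y ω = Dcal.filter (fun i => (Z i ω).2 = y))
    (p : 𝒴 → Ω → ℝ)
    (hp : ∀ y ω, p y ω =
      ((((Iy y ω).filter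
          (fun i => s ((Z i ω).1, y) ≤ s ((Z (Fin.last (2 * n)) ω).1, y))).card : ℝ) + 1)
        / (((Iy y ω).card : ℝ) + 1))
    (y : 𝒴) (I : Finset (Fin (2 * n + 1))) (hI : I ⊆ Dcal)
    (t : ℝ) (ht : t ∈ Set.Icc (0 : ℝ) 1)
    (hpos : 0 < P {ω | Iy y ω = I ∧ (Z (Fin.last (2 * n)) ω).2 = y}) :
    P[|{ω | Iy y ω = I ∧ (Z (Fin.last (2 * n)) ω).2 = y}] {ω | p y ω ≤ t}
      ≤ ENNReal.ofReal t := by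
  classical
  set L : Fin (2 * n + 1) := Fin.last (2 * n) with hLdef
  -- L is not a calibration index
  have hLD : L ∉ Dcal := by
    rw [hDcal]
    simp [hLdef, Fin.last]
  have hLI : L ∉ I := fun h => hLD (hI h)
  set m : ℕ := I.card with hm
  set K : Finset (Fin (2 * n + 1)) := insert L I with hK
  have hKcard : K.card = m + 1 := by
    rw [hK, Finset.card_insert_of_notMem hLI]
  set k : ℕ := ⌊t * (m + 1)⌋₊ with hk
  have htm : (0 : ℝ) ≤ t * (m + 1) := by
    apply mul_nonneg ht.1
    positivity
  -- the vector of observations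
  set V := (Fin (2 * n + 1) → 𝒳 × 𝒴) with hV
  set Zvec : Ω → V := fun ω i => Z i ω with hZvec
  have hZvecMeas : Measurable Zvec := measurable_pi_lambda _ hmeas
  -- rank count on the product space
  set cnt : V → Fin (2 * n + 1) → ℕ :=
    fun z j => (K.filter (fun i => s ((z i).1, y) ≤ s ((z j).1, y))).card with hcnt
  -- the conditioning event in the product space
  set E' : Set V := {z | (∀ i ∈ Dcal, ((z i).2 = y ↔ i ∈ I)) ∧ (z L).2 = y} with hE'
  set A' : Fin (2 * n + 1) → Set V := fun j => {z | cnt z j ≤ k} with hA'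
  -- measurability of the ingredients
  have hsz : ∀ i : Fin (2 * n + 1), Measurable (fun z : V => s ((z i).1, y)) := by
    intro i
    exact hs.comp ((measurable_fst.comp (measurable_pi_apply i)).prodMk measurable_const)
  have hlab : ∀ i : Fin (2 * n + 1), MeasurableSet {z : V | (z i).2 = y} := by
    intro i
    exact (measurable_snd.comp (measurable_pi_apply i)) (measurableSet_singleton y)
  have hmE' : MeasurableSet E' := by
    have h1 : E' = (⋂ i ∈ Dcal, {z : V | (z i).2 = y ↔ i ∈ I}) ∩ {z : V | (z L).2 = y} := by
      ext z
      simp [hE', Set.mem_iInter]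
    rw [h1]
    apply MeasurableSet.inter
    · apply Finset.measurableSet_biInter
      intro i _
      by_cases hiI : i ∈ I
      · have : {z : V | (z i).2 = y ↔ i ∈ I} = {z : V | (z i).2 = y} := by
          ext z; simp [hiI]
        rw [this]; exact hlab i
      · have : {z : V | (z i).2 = y ↔ i ∈ I} = {z : V | (z i).2 = y}ᶜ := by
          ext z; simp [hiI]
        rw [this]; exact (hlab i).compl
    · exact hlab L
  have hcntMeas : ∀ j, Measurable (fun z : V => cnt z j) := by
    intro j
    have : (fun z : V => cnt z j) =
        fun z => ∑ i ∈ K, if s ((z i).1, y) ≤ s ((z j).1, y) then 1 else 0 := by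
      funext z
      rw [hcnt]
      simp [Finset.sum_boole]
    rw [this]
    apply Finset.measurable_sum
    intro i _
    exact Measurable.ite (measurableSet_le (hsz i) (hsz j)) measurable_const measurable_const
  have hmA' : ∀ j, MeasurableSet (A' j) := by
    intro j
    exact (hcntMeas j) (MeasurableSet.of_discrete (s := Set.Iic k))
  -- the conditioning event in Ω is the preimage of E'
  have hEeq : {ω | Iy y ω = I ∧ (Z L ω).2 = y} = Zvec ⁻¹' E' := by
    ext ω
    simp only [Set.mem_setOf_eq, Set.mem_preimage, hE', hIy]
    constructor
    · rintro ⟨h1, h2⟩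
      exact ⟨(aux_filter_eq_iff Dcal I _ hI).mp h1, h2⟩
    · rintro ⟨h1, h2⟩
      exact ⟨(aux_filter_eq_iff Dcal I _ hI).mpr h1, h2⟩
  -- on the event, `p y ω ≤ t` is equivalent to `cnt (Zvec ω) L ≤ k`
  have hpcnt : ∀ ω, Zvec ω ∈ E' → (p y ω ≤ t ↔ cnt (Zvec ω) L ≤ k) := by
    intro ω hωE
    have hIyI : Iy y ω = I := by
      rw [hIy]
      exact (aux_filter_eq_iff Dcal I _ hI).mpr hωE.1
    have hcard : cnt (Zvec ω) L =
        (I.filter (fun i => s ((Z i ω).1, y) ≤ s ((Z L ω).1, y))).card + 1 := by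
      simp only [hcnt, hK, hZvec]
      rw [Finset.filter_insert]
      simp only [le_refl, if_true]
      rw [Finset.card_insert_of_notMem]
      intro hc
      exact hLI (Finset.mem_filter.mp hc).1
    have hpω : p y ω =
        (((I.filter (fun i => s ((Z i ω).1, y) ≤ s ((Z L ω).1, y))).card : ℝ) + 1) / (m + 1) := by
      rw [hp, hIyI, hm]
    rw [hpω]
    have hm1 : (0 : ℝ) < (m : ℝ) + 1 := by positivity
    rw [div_le_iff₀ hm1]
    constructor
    · intro h
      rw [hcard]
      apply Nat.le_floor
      push_cast
      exact h
    · intro h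
      rw [hcard] at h
      have := Nat.floor_le htm
      calc ((I.filter (fun i => s ((Z i ω).1, y) ≤ s ((Z L ω).1, y))).card : ℝ) + 1
          ≤ (k : ℝ) := by exact_mod_cast h
        _ ≤ t * (m + 1) := Nat.floor_le htm
  -- intersection event as a preimage
  have hEAeq : {ω | Iy y ω = I ∧ (Z L ω).2 = y} ∩ {ω | p y ω ≤ t}
      = Zvec ⁻¹' (E' ∩ A' L) := by
    ext ω
    simp only [Set.mem_inter_iff, Set.mem_setOf_eq, Set.mem_preimage]
    rw [show (Iy y ω = I ∧ (Z L ω).2 = y) ↔ Zvec ω ∈ E' from Set.ext_iff.mp hEeq ω]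
    constructor
    · rintro ⟨h1, h2⟩
      exact ⟨h1, (hpcnt ω h1).mp h2⟩
    · rintro ⟨h1, h2⟩
      exact ⟨h1, (hpcnt ω h1).mpr h2⟩
  -- push forward measure
  set ν : Measure V := Measure.map Zvec P with hν
  have hνapply : ∀ S : Set V, MeasurableSet S → ν S = P (Zvec ⁻¹' S) := by
    intro S hS
    rw [hν, Measure.map_apply hZvecMeas hS]
  -- exchangeability step: swapping j ∈ K with L preserves the measure of E' ∩ A' j
  have hswap : ∀ j ∈ K, ν (E' ∩ A' j) = ν (E' ∩ A' L) := by
    intro j hjK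
    rcases Finset.mem_insert.mp hjK with hjL | hjI
    · subst hjL; rfl
    · have hjL : j ≠ L := fun h => hLI (h ▸ hjI)
      set σ : Equiv.Perm (Fin (2 * n + 1)) := Equiv.swap j L with hσ
      have hσK : ∀ i ∈ K, σ i ∈ K := by
        intro i hiK
        rw [hσ, Equiv.swap_apply_def]
        split_ifs with h1 h2
        · exact Finset.mem_insert_self L I
        · exact Finset.mem_insert_of_mem hjI
        · exact hiK
      -- measure-preservation
      have hmap : ∀ S : Set V, MeasurableSet S →
          P ((fun ω => (Zvec ω) ∘ σ) ⁻¹' S) = P (Zvec ⁻¹' S) := by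
        intro S hS
        have h1 : Measurable (fun ω i => Z (σ i) ω) :=
          measurable_pi_lambda _ (fun i => hmeas (σ i))
        have h2 := hexch σ
        have h3 : (fun ω => (Zvec ω) ∘ σ) = (fun ω i => Z (σ i) ω) := rfl
        rw [h3, ← Measure.map_apply h1 hS, h2, Measure.map_apply hZvecMeas hS]
      -- the composed preimage identity
      have hpre : (fun ω => (Zvec ω) ∘ σ) ⁻¹' (E' ∩ A' j) = Zvec ⁻¹' (E' ∩ A' L) := by
        ext ω
        simp only [Set.mem_preimage]
        set z : V := Zvec ω with hz
        have hσj : σ j = L := Equiv.swap_apply_left j L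
        have hσL : σ L = j := Equiv.swap_apply_right j L
        have hσi : ∀ i ∈ Dcal, i ≠ j → σ i = i := by
          intro i hiD hij
          rw [hσ]
          apply Equiv.swap_apply_of_ne_of_ne hij
          intro h
          exact hLD (h ▸ hiD)
        -- E' part
        have hE'iff : (z ∘ σ) ∈ E' ↔ z ∈ E' := by
          simp only [hE', Set.mem_setOf_eq, Function.comp_apply]
          change ((∀ i ∈ Dcal, ((z (σ i)).2 = y ↔ i ∈ I)) ∧ (z (σ L)).2 = y) ↔
            ((∀ i ∈ Dcal, ((z i).2 = y ↔ i ∈ I)) ∧ (z L).2 = y)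
          constructor
          · rintro ⟨h1, h2⟩
            rw [hσL] at h2
            refine ⟨fun i hiD => ?_, ?_⟩
            · by_cases hij : i = j
              · subst hij
                simp only [hjI, iff_true]
                exact h2
              · have h3 := h1 i hiD
                rwa [hσi i hiD hij] at h3
            · have := h1 j (hI hjI)
              rw [hσj] at this
              exact this.mpr hjI
          · rintro ⟨h1, h2⟩
            refine ⟨fun i hiD => ?_, ?_⟩
            · by_cases hij : i = j
              · subst hij
                rw [hσj]
                simp only [hjI, iff_true]
                exact h2
              · have h3 := h1 i hiD
                rw [← hσi i hiD hij] at h3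
                -- need goal (z (σ i)).2 = y ↔ i ∈ I
                rw [hσi i hiD hij]
                exact h1 i hiD
            · rw [hσL]
              exact (h1 j (hI hjI)).mpr hjI
        -- rank part
        have hcnteq : cnt (z ∘ σ) j = cnt z L := by
          rw [hcnt]
          simp only [Function.comp_apply, hσj]
          apply Finset.card_bij (fun i _ => σ i)
          · intro a ha
            obtain ⟨haK, haP⟩ := Finset.mem_filter.mp ha
            exact Finset.mem_filter.mpr ⟨hσK a haK, haP⟩
          · intro a _ b _ hab
            exact σ.injective hab
          · intro b hb
            obtain ⟨hbK, hbP⟩ := Finset.mem_filter.mp hb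
            refine ⟨σ b, ?_, ?_⟩
            · apply Finset.mem_filter.mpr
              constructor
              · exact hσK b hbK
              · have : σ (σ b) = b := σ.symm_apply_apply b ▸ by
                  rw [hσ, Equiv.swap_apply_self]
                rw [this]
                exact hbP
            · rw [hσ, Equiv.swap_apply_self]
        simp only [Set.mem_inter_iff, hA', Set.mem_setOf_eq]
        rw [hE'iff]; change _ ∧ cnt (z ∘ σ) j ≤ k ↔ _; rw [hcnteq]
      rw [hνapply _ ((hmE'.inter (hmA' j))), hνapply _ ((hmE'.inter (hmA' L))),
        ← hpre, hmap _ (hmE'.inter (hmA' j))]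
  -- counting bound: sum of measures ≤ k * ν E'
  have hsum : ∑ j ∈ K, ν (E' ∩ A' j) ≤ (k : ℝ≥0∞) * ν E' := by
    have h1 : ∀ j ∈ K, ν (E' ∩ A' j) = ∫⁻ z, (E' ∩ A' j).indicator (fun _ => 1) z ∂ν := by
      intro j _
      rw [lintegral_indicator_const (hmE'.inter (hmA' j)), one_mul]
    rw [Finset.sum_congr rfl h1, ← lintegral_finset_sum]
    · have h2 : ∫⁻ z, E'.indicator (fun _ => (k : ℝ≥0∞)) z ∂ν = (k : ℝ≥0∞) * ν E' :=
        lintegral_indicator_const hmE' _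
      rw [← h2]
      refine lintegral_mono fun z => ?_
      show ∑ j ∈ K, (E' ∩ A' j).indicator (fun _ => (1 : ℝ≥0∞)) z
        ≤ E'.indicator (fun _ => (k : ℝ≥0∞)) z
      by_cases hzE : z ∈ E'
      · have hptw : ∑ j ∈ K, (E' ∩ A' j).indicator (fun _ => (1 : ℝ≥0∞)) z
            = ((K.filter (fun j => cnt z j ≤ k)).card : ℝ≥0∞) := by
          rw [← Finset.sum_boole]
          apply Finset.sum_congr rfl
          intro j _
          simp only [Set.indicator_apply, Set.mem_inter_iff, hA', Set.mem_setOf_eq, hzE, true_and]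
        rw [hptw, Set.indicator_of_mem hzE]
        have := aux_rank_count_le K (fun i => s ((z i).1, y)) k
        exact_mod_cast this
      · have hptw : ∑ j ∈ K, (E' ∩ A' j).indicator (fun _ => (1 : ℝ≥0∞)) z = 0 := by
          apply Finset.sum_eq_zero
          intro j _
          simp [Set.indicator_apply, hzE]
        rw [hptw, Set.indicator_of_notMem hzE]
    · intro j _
      exact (measurable_indicator_const_iff 1).mpr (hmE'.inter (hmA' j))
  -- sum of equal terms
  have hsum2 : ∑ j ∈ K, ν (E' ∩ A' j) = (m + 1 : ℝ≥0∞) * ν (E' ∩ A' L) := by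
    rw [Finset.sum_congr rfl hswap, Finset.sum_const, hKcard, nsmul_eq_mul]
    push_cast
    ring
  have hmain : (m + 1 : ℝ≥0∞) * ν (E' ∩ A' L) ≤ (k : ℝ≥0∞) * ν E' := hsum2 ▸ hsum
  -- wrap up with conditional probability
  have hmE : MeasurableSet {ω | Iy y ω = I ∧ (Z L ω).2 = y} := by
    rw [hEeq]; exact hZvecMeas hmE'
  rw [cond_apply hmE]
  have hPE : P {ω | Iy y ω = I ∧ (Z L ω).2 = y} = ν E' := by
    rw [hνapply _ hmE', hEeq]
  have hPEA : P ({ω | Iy y ω = I ∧ (Z L ω).2 = y} ∩ {ω | p y ω ≤ t}) = ν (E' ∩ A' L) := by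
    rw [hνapply _ (hmE'.inter (hmA' L)), hEAeq]
  rw [hPE, hPEA]
  have hνE'pos : ν E' ≠ 0 := by
    rw [← hPE]; exact hpos.ne'
  have hνE'fin : ν E' ≠ ∞ := by
    rw [← hPE]; exact (measure_ne_top P _)
  have hm1ne : ((m : ℝ≥0∞) + 1) ≠ 0 := by simp
  have hm1fin : ((m : ℝ≥0∞) + 1) ≠ ∞ := by simp
  -- ν (E' ∩ A' L) ≤ (k/(m+1)) * ν E'
  have hstep : ν (E' ∩ A' L) ≤ (k : ℝ≥0∞) * ν E' / (m + 1 : ℝ≥0∞) := by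
    rw [ENNReal.le_div_iff_mul_le (Or.inl hm1ne) (Or.inl hm1fin)]
    rw [mul_comm]
    exact hmain
  calc (ν E')⁻¹ * ν (E' ∩ A' L)
      ≤ (ν E')⁻¹ * ((k : ℝ≥0∞) * ν E' / (m + 1 : ℝ≥0∞)) := by
        exact mul_le_mul_right hstep _
    _ = (k : ℝ≥0∞) / (m + 1 : ℝ≥0∞) * ((ν E')⁻¹ * ν E') := by
        rw [ENNReal.div_eq_inv_mul, ENNReal.div_eq_inv_mul]
        ring
    _ = (k : ℝ≥0∞) / (m + 1 : ℝ≥0∞) := by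
        rw [ENNReal.inv_mul_cancel hνE'pos hνE'fin, mul_one]
    _ ≤ ENNReal.ofReal t := by
        rw [ENNReal.div_le_iff hm1ne hm1fin]
        have h1 : (k : ℝ≥0∞) = ENNReal.ofReal (k : ℝ) := by
          rw [ENNReal.ofReal_natCast]
        have h2 : ENNReal.ofReal t * ((m : ℝ≥0∞) + 1) = ENNReal.ofReal (t * (m + 1)) := by
          rw [ENNReal.ofReal_mul ht.1]
          congr 1
          rw [ENNReal.ofReal_add (by positivity) zero_le_one]
          simp [ENNReal.ofReal_natCast]
        rw [h1, h2]
        exact ENNReal.ofReal_le_ofReal (Nat.floor_le htm)
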